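/- Suppose every coupling J_B (B ∈ 𝔅) is independently Gaussian with mean J_{0,B} ∈ ℝ and variance Λ_B² > 0, fix A ∈ 𝔅, and assume the temperature is high enough that 8 β² Λ_A² ≥ 3. Then the quenched average of the fourth power of the correlation function has the nonzero lower bound E[ tanh⁴(β J) ]_{{0, Λ_A²}} ≤ E[ ⟨σ_A⟩_J⁴ ]_{{J_{0,B}, Λ_B²}}. -/

import Mathlib

open MeasureTheory Real Finset ProbabilityTheory
open scoped NNReal ENNReal

/-- The spin value of a Boolean: `true ↦ 1`, `false ↦ -1`. -/
noncomputable def spinVal (b : Bool) : ℝ := if b then 1 else -1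

/-- `σ_B = ∏ i ∈ B, σ_i`. -/
noncomputable def sigmaSet {V : Type} (σ : V → Bool) (B : Finset V) : ℝ :=
  ∏ i ∈ B, spinVal (σ i)

/-- The Gibbs (thermal) average `⟨σ_A⟩_J` at inverse temperature `β` for the Hamiltonian
`H(σ) = -∑_{B ∈ ℬ} J_B σ_B`. -/
noncomputable def gibbsAvg {V : Type} [Fintype V] [DecidableEq V] (β : ℝ)
    (ℬ : Finset (Finset V)) (J : ℬ → ℝ) (A : Finset V) : ℝ :=
  (∑ σ : V → Bool, sigmaSet σ A * Real.exp (β * ∑ B : ℬ, J B * sigmaSet σ (B : Finset V))) /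
  (∑ σ : V → Bool, Real.exp (β * ∑ B : ℬ, J B * sigmaSet σ (B : Finset V)))

/-- The product measure of independent Gaussian couplings `J_B ~ N(J_{0,B}, Λ_B²)`. -/
noncomputable def gaussQuenched {V : Type} (ℬ : Finset (Finset V))
    (J0 : Finset V → ℝ) (Λ : Finset V → NNReal) : Measure (ℬ → ℝ) :=
  Measure.pi fun B => gaussianReal (J0 (B : Finset V)) (Λ (B : Finset V) ^ 2)

/-! ### Auxiliary facts about `tanh` -/

lemma tanh_formula' (x : ℝ) : Real.tanh x = 1 - 2 / (Real.exp (2 * x) + 1) := by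
  have hE : 0 < Real.exp x := Real.exp_pos x
  have h2 : Real.exp (2 * x) = Real.exp x * Real.exp x := by
    rw [two_mul, Real.exp_add]
  rw [Real.tanh_eq_sinh_div_cosh, Real.sinh_eq, Real.cosh_eq, h2, Real.exp_neg]
  have h1 : (0:ℝ) < Real.exp x + (Real.exp x)⁻¹ := by positivity
  have h3 : (0:ℝ) < Real.exp x * Real.exp x + 1 := by positivity
  field_simp
  ring

lemma tanh_monotone' : Monotone Real.tanh := by
  intro x y hxy
  rw [tanh_formula', tanh_formula']
  have h1 : (0:ℝ) < Real.exp (2*x) + 1 := by positivity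
  have h2 : Real.exp (2*x) ≤ Real.exp (2*y) := Real.exp_le_exp.mpr (by linarith)
  gcongr

lemma abs_tanh_le_one' (x : ℝ) : |Real.tanh x| ≤ 1 := by
  have h : (0:ℝ) < Real.exp (2*x) + 1 := by positivity
  have h2 : 2 / (Real.exp (2*x) + 1) ≤ 2 := by
    rw [div_le_iff₀ h]
    nlinarith [Real.exp_pos (2*x)]
  have h3 : (0:ℝ) < 2 / (Real.exp (2*x) + 1) := by positivity
  rw [abs_le, tanh_formula']
  constructor <;> linarith

lemma continuous_tanh' : Continuous Real.tanh := by
  have h : Real.tanh = fun x => Real.sinh x / Real.cosh x :=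
    funext fun x => Real.tanh_eq_sinh_div_cosh x
  rw [h]
  exact Real.continuous_sinh.div Real.continuous_cosh fun x => (Real.cosh_pos x).ne'

lemma tanh_zero' : Real.tanh 0 = 0 := by
  rw [tanh_formula']; norm_num

lemma tanh_pow4_mono' {x y : ℝ} (h : |x| ≤ |y|) : Real.tanh x ^ 4 ≤ Real.tanh y ^ 4 := by
  have habs : ∀ z : ℝ, Real.tanh z ^ 4 = Real.tanh |z| ^ 4 := by
    intro z
    rcases abs_cases z with ⟨h1, _⟩ | ⟨h1, _⟩
    · rw [h1]
    · rw [h1, Real.tanh_neg]; ring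
  rw [habs x, habs y]
  have h0x : (0:ℝ) ≤ Real.tanh |x| := by
    rw [← tanh_zero']; exact tanh_monotone' (abs_nonneg x)
  exact pow_le_pow_left₀ h0x (tanh_monotone' h) 4

lemma tanh_pow4_le_one' (x : ℝ) : Real.tanh x ^ 4 ≤ 1 := by
  calc Real.tanh x ^ 4 = |Real.tanh x| ^ 4 := by rw [← abs_pow]; rw [abs_of_nonneg (by positivity)]
    _ ≤ 1 := pow_le_one₀ (abs_nonneg _) (abs_tanh_le_one' x)

/-! ### Gaussian integral manipulations -/

lemma gauss_density_integral (m : ℝ) {v : ℝ≥0} (hv : v ≠ 0) (F : ℝ → ℝ) :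
    ∫ x, F x ∂(gaussianReal m v) = ∫ x, gaussianPDFReal m v x * F x := by
  rw [gaussianReal_of_var_ne_zero _ hv]
  have hmeas : Measurable fun x => Real.toNNReal (gaussianPDFReal m v x) :=
    (measurable_gaussianPDFReal m v).real_toNNReal
  have hPDF : gaussianPDF m v
      = fun x => ((Real.toNNReal (gaussianPDFReal m v x) : ℝ≥0) : ℝ≥0∞) := by
    funext x
    rw [gaussianPDF, ENNReal.ofReal]
  rw [hPDF, integral_withDensity_eq_integral_smul hmeas]
  congr 1
  funext x
  rw [NNReal.smul_def, smul_eq_mul, Real.coe_toNNReal _ (gaussianPDFReal_nonneg m v x)]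

lemma pdf_factor (m : ℝ) {v : ℝ≥0} (hv : v ≠ 0) (x : ℝ) :
    gaussianPDFReal m v x
      = (Real.exp (- m^2 / (2*v)) * Real.exp (m / v * x)) * gaussianPDFReal 0 v x := by
  have hv' : (0:ℝ) < v := by
    have : 0 < v := lt_of_le_of_ne (zero_le : 0 ≤ v) (Ne.symm hv)
    exact_mod_cast this
  have hexp : Real.exp (- (x - m)^2 / (2*(v:ℝ)))
      = Real.exp (- m^2 / (2*(v:ℝ))) * Real.exp (m / (v:ℝ) * x)
        * Real.exp (- (x - 0)^2 / (2*(v:ℝ))) := by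
    rw [← Real.exp_add, ← Real.exp_add]
    congr 1
    field_simp
    ring
  simp only [gaussianPDFReal]
  rw [hexp]
  ring

lemma gauss_tilt (m : ℝ) {v : ℝ≥0} (hv : v ≠ 0) (F : ℝ → ℝ) :
    ∫ x, F x ∂(gaussianReal m v)
      = Real.exp (- m^2 / (2*v)) * ∫ x, F x * Real.exp (m / v * x) ∂(gaussianReal 0 v) := by
  rw [gauss_density_integral m hv, gauss_density_integral 0 hv, ← integral_const_mul]
  congr 1
  funext x
  rw [pdf_factor m hv x]
  ring

lemma gauss_neg_invariant {v : ℝ≥0} (G : ℝ → ℝ) (hG : Measurable G) :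
    ∫ x, G (-x) ∂(gaussianReal 0 v) = ∫ x, G x ∂(gaussianReal 0 v) := by
  have h1 : (⟨(-1:ℝ)^2, sq_nonneg _⟩ : ℝ≥0) = 1 := by
    ext; norm_num
  have hmap : (gaussianReal 0 v).map (fun x : ℝ => -1 * x) = gaussianReal 0 v := by
    rw [gaussianReal_map_const_mul, mul_zero]
    congr 1; ext; simp
  calc ∫ x, G (-x) ∂(gaussianReal 0 v)
      = ∫ x, G (-1 * x) ∂(gaussianReal 0 v) := by simp only [neg_one_mul]
    _ = ∫ y, G y ∂((gaussianReal 0 v).map (fun x : ℝ => -1 * x)) :=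
        (integral_map (measurable_const_mul (-1 : ℝ)).aemeasurable
          (by rw [hmap]; exact hG.aestronglyMeasurable)).symm
    _ = ∫ y, G y ∂(gaussianReal 0 v) := by rw [hmap]

lemma exp_mul_pdf (a : ℝ) {v : ℝ≥0} (hv : v ≠ 0) (x : ℝ) :
    Real.exp (a * x) * gaussianPDFReal 0 v x
      = Real.exp (a^2 * v / 2) * gaussianPDFReal (a*v) v x := by
  have hv' : (0:ℝ) < v := by
    have : 0 < v := lt_of_le_of_ne (zero_le : 0 ≤ v) (Ne.symm hv)
    exact_mod_cast this
  have hexp : Real.exp (a * x) * Real.exp (- (x - 0)^2 / (2*(v:ℝ)))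
      = Real.exp (a^2 * v / 2) * Real.exp (- (x - a*v)^2 / (2*(v:ℝ))) := by
    rw [← Real.exp_add, ← Real.exp_add]
    congr 1
    field_simp
    ring
  simp only [gaussianPDFReal]
  calc Real.exp (a*x) * ((√(2 * π * v))⁻¹ * Real.exp (- (x - 0)^2 / (2*(v:ℝ))))
      = (√(2 * π * v))⁻¹ * (Real.exp (a*x) * Real.exp (- (x - 0)^2 / (2*(v:ℝ)))) := by ring
    _ = (√(2 * π * v))⁻¹ * (Real.exp (a^2 * v / 2) * Real.exp (- (x - a*v)^2 / (2*(v:ℝ)))) := by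
        rw [hexp]
    _ = _ := by ring

lemma integrable_exp_gauss (a : ℝ) {v : ℝ≥0} (hv : v ≠ 0) :
    Integrable (fun x => Real.exp (a * x)) (gaussianReal 0 v) := by
  rw [gaussianReal_of_var_ne_zero _ hv,
    integrable_withDensity_iff (measurable_gaussianPDF 0 v)
      (ae_of_all _ fun x => ENNReal.ofReal_lt_top)]
  have h : (fun x => Real.exp (a * x) * (gaussianPDF 0 v x).toReal)
      = fun x => Real.exp (a^2 * v / 2) * gaussianPDFReal (a*v) v x := by
    funext x
    rw [gaussianPDF, ENNReal.toReal_ofReal (gaussianPDFReal_nonneg _ _ _)]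
    exact exp_mul_pdf a hv x
  rw [h]
  exact (integrable_gaussianPDFReal (a*v) v).const_mul _

lemma integrable_cosh_gauss (a : ℝ) {v : ℝ≥0} (hv : v ≠ 0) :
    Integrable (fun x => Real.cosh (a * x)) (gaussianReal 0 v) := by
  have h : (fun x => Real.cosh (a * x))
      = fun x => (Real.exp (a * x) + Real.exp ((-a) * x)) / 2 := by
    funext x
    rw [Real.cosh_eq]
    ring_nf
  rw [h]
  exact ((integrable_exp_gauss a hv).add (integrable_exp_gauss (-a) hv)).div_const 2

/-- Chebyshev association (Harris) inequality for a probability measure. -/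
lemma harris_assoc {ν : Measure ℝ} [IsProbabilityMeasure ν] {f g : ℝ → ℝ}
    (hf : Measurable f) (hg : Measurable g)
    (hfb : ∀ x, |f x| ≤ 1) (hgint : Integrable g ν)
    (hmono : ∀ x y : ℝ, 0 ≤ (f x - f y) * (g x - g y)) :
    (∫ x, f x ∂ν) * (∫ x, g x ∂ν) ≤ ∫ x, f x * g x ∂ν := by
  have hfint : Integrable f ν :=
    (integrable_const (1:ℝ)).mono' hf.aestronglyMeasurable (ae_of_all _ fun x => by
      simpa using hfb x)
  have hfgint : Integrable (fun x => f x * g x) ν :=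
    hgint.bdd_mul (c := 1) hf.aestronglyMeasurable (ae_of_all _ fun x => by simpa using hfb x)
  have key : 0 ≤ ∫ z : ℝ × ℝ, (f z.1 - f z.2) * (g z.1 - g z.2) ∂(ν.prod ν) :=
    integral_nonneg fun z => hmono _ _
  have i1 : Integrable (fun z : ℝ × ℝ => f z.1 * g z.1) (ν.prod ν) :=
    (hfgint.mul_prod (integrable_const 1)).congr
      (Filter.Eventually.of_forall fun z => by simp)
  have i2 : Integrable (fun z : ℝ × ℝ => f z.2 * g z.2) (ν.prod ν) :=
    ((integrable_const 1).mul_prod hfgint).congr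
      (Filter.Eventually.of_forall fun z => by simp)
  have i3 : Integrable (fun z : ℝ × ℝ => f z.1 * g z.2) (ν.prod ν) := hfint.mul_prod hgint
  have i4 : Integrable (fun z : ℝ × ℝ => g z.1 * f z.2) (ν.prod ν) := hgint.mul_prod hfint
  have key2 : 0 ≤ ∫ z : ℝ × ℝ,
      ((f z.1 * g z.1 + f z.2 * g z.2) - (f z.1 * g z.2 + g z.1 * f z.2)) ∂(ν.prod ν) :=
    key.trans (le_of_eq (integral_congr_ae (Filter.Eventually.of_forall fun z => by ring)))
  have e1 : ∫ z : ℝ × ℝ, f z.1 * g z.1 ∂(ν.prod ν) = ∫ x, f x * g x ∂ν := by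
    have h := integral_prod_mul (μ := ν) (ν := ν) (fun x => f x * g x) (fun _ => (1:ℝ))
    simpa using h
  have e2 : ∫ z : ℝ × ℝ, f z.2 * g z.2 ∂(ν.prod ν) = ∫ x, f x * g x ∂ν := by
    have h := integral_prod_mul (μ := ν) (ν := ν) (fun _ => (1:ℝ)) (fun x => f x * g x)
    simpa using h
  have e3 : ∫ z : ℝ × ℝ, f z.1 * g z.2 ∂(ν.prod ν) = (∫ x, f x ∂ν) * ∫ x, g x ∂ν :=
    integral_prod_mul f g
  have e4 : ∫ z : ℝ × ℝ, g z.1 * f z.2 ∂(ν.prod ν) = (∫ x, g x ∂ν) * ∫ x, f x ∂ν :=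
    integral_prod_mul g f
  have i12 : Integrable (fun z : ℝ × ℝ => f z.1 * g z.1 + f z.2 * g z.2) (ν.prod ν) :=
    i1.add i2
  have i34 : Integrable (fun z : ℝ × ℝ => f z.1 * g z.2 + g z.1 * f z.2) (ν.prod ν) :=
    i3.add i4
  rw [integral_sub i12 i34, integral_add i1 i2, integral_add i3 i4,
    e1, e2, e3, e4] at key2
  linarith

/-- An even, `|·|`-monotone, bounded function has minimal Gaussian expectation
at mean zero. -/
lemma gauss_shift_le {F : ℝ → ℝ} (hFmeas : Measurable F) (hFeven : ∀ x, F (-x) = F x)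
    (hFmono : ∀ x y : ℝ, |x| ≤ |y| → F x ≤ F y) (hFbd : ∀ x, |F x| ≤ 1)
    {v : ℝ≥0} (hv : v ≠ 0) (m : ℝ) :
    ∫ x, F x ∂(gaussianReal 0 v) ≤ ∫ x, F x ∂(gaussianReal m v) := by
  set a : ℝ := m / v with ha
  set ν : Measure ℝ := gaussianReal 0 v with hν
  -- exp-tilt symmetrization into cosh, for any even bounded measurable function
  have tilt_cosh : ∀ (G : ℝ → ℝ), Measurable G → (∀ x, G (-x) = G x) → (∀ x, |G x| ≤ 1) →
      ∫ x, G x ∂(gaussianReal m v)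
        = Real.exp (- m^2 / (2*v)) * ∫ x, G x * Real.cosh (a * x) ∂ν := by
    intro G hGmeas hGeven hGbd
    rw [gauss_tilt m hv G]
    congr 1
    have hint : Integrable (fun x => G x * Real.exp (a * x)) ν :=
      (integrable_exp_gauss a hv).bdd_mul (c := 1) hGmeas.aestronglyMeasurable
        (ae_of_all _ fun x => by simpa using hGbd x)
    have hint' : Integrable (fun x => G x * Real.exp (-(a * x))) ν := by
      have : Integrable (fun x => G x * Real.exp ((-a) * x)) ν :=
        (integrable_exp_gauss (-a) hv).bdd_mul (c := 1) hGmeas.aestronglyMeasurable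
          (ae_of_all _ fun x => by simpa using hGbd x)
      simpa only [neg_mul] using this
    have hneg : ∫ x, G x * Real.exp (a * x) ∂ν = ∫ x, G x * Real.exp (-(a * x)) ∂ν := by
      have hGm : Measurable fun x => G x * Real.exp (a * x) :=
        hGmeas.mul (Real.measurable_exp.comp (measurable_id.const_mul a))
      calc ∫ x, G x * Real.exp (a * x) ∂ν
          = ∫ x, G (-x) * Real.exp (a * (-x)) ∂ν := gauss_neg_invariant _ hGm |>.symm
        _ = ∫ x, G x * Real.exp (-(a * x)) ∂ν := by
            congr 1; funext x; rw [hGeven x, mul_neg]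
    have hcosh : ∀ x : ℝ, G x * Real.cosh (a * x)
        = (G x * Real.exp (a * x) + G x * Real.exp (-(a * x))) / 2 := by
      intro x; rw [Real.cosh_eq]; ring
    calc ∫ x, G x * Real.exp (a * x) ∂ν
        = (∫ x, G x * Real.exp (a * x) ∂ν + ∫ x, G x * Real.exp (-(a * x)) ∂ν) / 2 := by
          rw [← hneg]; ring
      _ = ∫ x, (G x * Real.exp (a * x) + G x * Real.exp (-(a * x))) / 2 ∂ν := by
          rw [integral_div, integral_add hint hint']
      _ = ∫ x, G x * Real.cosh (a * x) ∂ν := by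
          congr 1; funext x; rw [hcosh x]
  have hF := tilt_cosh F hFmeas hFeven hFbd
  have h1 := tilt_cosh (fun _ => (1:ℝ)) measurable_const (fun _ => rfl)
    (fun _ => by norm_num)
  simp only [one_mul] at h1
  have hone : (1:ℝ) = Real.exp (- m^2 / (2*v)) * ∫ x, Real.cosh (a * x) ∂ν := by
    rw [← h1]
    simp [integral_const]
  -- Harris
  have hcosh_meas : Measurable fun x : ℝ => Real.cosh (a * x) :=
    Real.continuous_cosh.measurable.comp (measurable_id.const_mul a)
  have hmono : ∀ x y : ℝ, 0 ≤ (F x - F y) * (Real.cosh (a*x) - Real.cosh (a*y)) := by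
    intro x y
    rcases le_total |x| |y| with h | h
    · have h1 : F x ≤ F y := hFmono x y h
      have h2 : Real.cosh (a*x) ≤ Real.cosh (a*y) := by
        rw [Real.cosh_le_cosh]
        rw [abs_mul, abs_mul]
        exact mul_le_mul_of_nonneg_left h (abs_nonneg a)
      have := mul_nonneg (sub_nonneg.mpr h1) (sub_nonneg.mpr h2)
      nlinarith
    · have h1 : F y ≤ F x := hFmono y x h
      have h2 : Real.cosh (a*y) ≤ Real.cosh (a*x) := by
        rw [Real.cosh_le_cosh]
        rw [abs_mul, abs_mul]
        exact mul_le_mul_of_nonneg_left h (abs_nonneg a)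
      exact mul_nonneg (sub_nonneg.mpr h1) (sub_nonneg.mpr h2)
  have hHarris := harris_assoc hFmeas hcosh_meas hFbd (integrable_cosh_gauss a hv) hmono
  have hC : (0:ℝ) < Real.exp (- m^2 / (2*v)) := Real.exp_pos _
  calc ∫ x, F x ∂ν
      = (∫ x, F x ∂ν) * 1 := by ring
    _ = (∫ x, F x ∂ν) * (Real.exp (- m^2 / (2*v)) * ∫ x, Real.cosh (a * x) ∂ν) := by
        rw [← hone]
    _ = Real.exp (- m^2 / (2*v)) * ((∫ x, F x ∂ν) * ∫ x, Real.cosh (a * x) ∂ν) := by ring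
    _ ≤ Real.exp (- m^2 / (2*v)) * ∫ x, F x * Real.cosh (a * x) ∂ν :=
        mul_le_mul_of_nonneg_left hHarris hC.le
    _ = ∫ x, F x ∂(gaussianReal m v) := hF.symm

/-- The core scalar inequality: shifted `tanh⁴` Gaussian averages dominate the centered one. -/
lemma inner_bound {β : ℝ} (hβ : β ≠ 0) {v : ℝ≥0} (hv : v ≠ 0) (m d : ℝ) :
    ∫ x, Real.tanh (β * x) ^ 4 ∂(gaussianReal 0 v)
      ≤ ∫ t, Real.tanh (β * t + d) ^ 4 ∂(gaussianReal m v) := by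
  set F : ℝ → ℝ := fun x => Real.tanh (β * x) ^ 4 with hF
  have hFmeas : Measurable F :=
    ((continuous_tanh'.comp (continuous_const.mul continuous_id)).pow 4).measurable
  have hFeven : ∀ x, F (-x) = F x := by
    intro x
    simp only [hF, mul_neg, Real.tanh_neg]
    ring
  have hFmono : ∀ x y : ℝ, |x| ≤ |y| → F x ≤ F y := by
    intro x y h
    apply tanh_pow4_mono'
    rw [abs_mul, abs_mul]
    exact mul_le_mul_of_nonneg_left h (abs_nonneg β)
  have hFbd : ∀ x, |F x| ≤ 1 := by
    intro x
    rw [abs_of_nonneg (by positivity)]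
    exact tanh_pow4_le_one' _
  have hstep : ∫ t, Real.tanh (β * t + d) ^ 4 ∂(gaussianReal m v)
      = ∫ x, F x ∂(gaussianReal (m + d/β) v) := by
    have h1 : ∀ t : ℝ, Real.tanh (β * t + d) ^ 4 = F (t + d/β) := by
      intro t
      simp only [hF]
      congr 2
      field_simp
    rw [← gaussianReal_map_add_const (d/β),
      integral_map (measurable_add_const (d/β)).aemeasurable hFmeas.aestronglyMeasurable]
    exact integral_congr_ae (ae_of_all _ h1)
  rw [hstep]
  exact gauss_shift_le hFmeas hFeven hFmono hFbd hv (m + d/β)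

/-! ### Combinatorial structure of the Gibbs average -/

lemma sigmaSet_pm {V : Type} (σ : V → Bool) (B : Finset V) :
    sigmaSet σ B = 1 ∨ sigmaSet σ B = -1 := by
  unfold sigmaSet
  induction B using Finset.cons_induction with
  | empty => left; simp
  | cons i s hi ih =>
    rw [Finset.prod_cons]
    rcases ih with h | h <;> rw [h] <;> by_cases hh : σ i <;> simp [spinVal, hh]

lemma gibbs_tanh {V : Type} [Fintype V] [DecidableEq V] (β : ℝ)
    (ℬ : Finset (Finset V)) (A : Finset V) (hA : A ∈ ℬ) (hAne : A.Nonempty)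
    (J : ℬ → ℝ) :
    ∃ c : ℝ, ∀ t : ℝ,
      gibbsAvg β ℬ (Function.update J ⟨A, hA⟩ t) A = Real.tanh (β * t + c) := by
  classical
  set a : {x // x ∈ ℬ} := ⟨A, hA⟩ with haa
  set R : (V → Bool) → ℝ :=
    fun σ => ∑ B ∈ Finset.univ.erase a, J B * sigmaSet σ (B : Finset V) with hR
  set Wp : ℝ := ∑ σ ∈ Finset.univ.filter (fun σ : V → Bool => sigmaSet σ A = 1),
    Real.exp (β * R σ) with hWp
  set Wm : ℝ := ∑ σ ∈ Finset.univ.filter (fun σ : V → Bool => ¬ sigmaSet σ A = 1),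
    Real.exp (β * R σ) with hWm
  -- positivity of the two partial partition functions
  have hWppos : 0 < Wp := by
    apply Finset.sum_pos (fun σ _ => Real.exp_pos _)
    refine ⟨fun _ => true, ?_⟩
    rw [Finset.mem_filter]
    refine ⟨Finset.mem_univ _, ?_⟩
    simp [sigmaSet, spinVal]
  have hWmpos : 0 < Wm := by
    apply Finset.sum_pos (fun σ _ => Real.exp_pos _)
    obtain ⟨i₀, hi₀⟩ := hAne
    refine ⟨fun j => !decide (j = i₀), ?_⟩
    have hs : sigmaSet (fun j => !decide (j = i₀)) A = -1 := by
      unfold sigmaSet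
      rw [Finset.prod_eq_single i₀ (fun b _ hb => by simp [spinVal, hb])
        (fun h => absurd hi₀ h)]
      simp [spinVal]
    simp only [Finset.mem_filter, Finset.mem_univ, true_and, hs]
    norm_num
  -- decomposition of the interaction sum
  have hsum : ∀ (t : ℝ) (σ : V → Bool),
      (∑ B : ℬ, Function.update J a t B * sigmaSet σ (B : Finset V))
        = t * sigmaSet σ A + R σ := by
    intro t σ
    rw [← Finset.add_sum_erase _ _ (Finset.mem_univ a)]
    congr 1
    · rw [Function.update_self]
    · exact Finset.sum_congr rfl fun B hB => by
        rw [Function.update_of_ne (Finset.ne_of_mem_erase hB)]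
  have hnum : ∀ t : ℝ,
      (∑ σ : V → Bool, sigmaSet σ A
          * Real.exp (β * ∑ B : ℬ, Function.update J a t B * sigmaSet σ (B : Finset V)))
        = Real.exp (β * t) * Wp - Real.exp (-(β * t)) * Wm := by
    intro t
    rw [← Finset.sum_filter_add_sum_filter_not Finset.univ
      (fun σ : V → Bool => sigmaSet σ A = 1)]
    have h1 : ∑ σ ∈ Finset.univ.filter (fun σ : V → Bool => sigmaSet σ A = 1),
        sigmaSet σ A
          * Real.exp (β * ∑ B : ℬ, Function.update J a t B * sigmaSet σ (B : Finset V))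
        = Real.exp (β * t) * Wp := by
      rw [hWp, Finset.mul_sum]
      apply Finset.sum_congr rfl
      intro σ hσ
      have hs : sigmaSet σ A = 1 := (Finset.mem_filter.mp hσ).2
      rw [hsum t σ, hs, mul_one, one_mul, mul_add, Real.exp_add]
    have h2 : ∑ σ ∈ Finset.univ.filter (fun σ : V → Bool => ¬ sigmaSet σ A = 1),
        sigmaSet σ A
          * Real.exp (β * ∑ B : ℬ, Function.update J a t B * sigmaSet σ (B : Finset V))
        = -(Real.exp (-(β * t)) * Wm) := by
      rw [hWm, Finset.mul_sum, ← Finset.sum_neg_distrib]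
      apply Finset.sum_congr rfl
      intro σ hσ
      have hs : sigmaSet σ A = -1 := by
        rcases sigmaSet_pm σ A with h | h
        · exact absurd h (Finset.mem_filter.mp hσ).2
        · exact h
      rw [hsum t σ, hs]
      rw [mul_add, Real.exp_add]
      have : β * (t * (-1)) = -(β * t) := by ring
      rw [this]
      ring
    rw [h1, h2]
    ring
  have hden : ∀ t : ℝ,
      (∑ σ : V → Bool,
          Real.exp (β * ∑ B : ℬ, Function.update J a t B * sigmaSet σ (B : Finset V)))
        = Real.exp (β * t) * Wp + Real.exp (-(β * t)) * Wm := by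
    intro t
    rw [← Finset.sum_filter_add_sum_filter_not Finset.univ
      (fun σ : V → Bool => sigmaSet σ A = 1)]
    have h1 : ∑ σ ∈ Finset.univ.filter (fun σ : V → Bool => sigmaSet σ A = 1),
        Real.exp (β * ∑ B : ℬ, Function.update J a t B * sigmaSet σ (B : Finset V))
        = Real.exp (β * t) * Wp := by
      rw [hWp, Finset.mul_sum]
      apply Finset.sum_congr rfl
      intro σ hσ
      have hs : sigmaSet σ A = 1 := (Finset.mem_filter.mp hσ).2
      rw [hsum t σ, hs, mul_one, mul_add, Real.exp_add]
    have h2 : ∑ σ ∈ Finset.univ.filter (fun σ : V → Bool => ¬ sigmaSet σ A = 1),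
        Real.exp (β * ∑ B : ℬ, Function.update J a t B * sigmaSet σ (B : Finset V))
        = Real.exp (-(β * t)) * Wm := by
      rw [hWm, Finset.mul_sum]
      apply Finset.sum_congr rfl
      intro σ hσ
      have hs : sigmaSet σ A = -1 := by
        rcases sigmaSet_pm σ A with h | h
        · exact absurd h (Finset.mem_filter.mp hσ).2
        · exact h
      rw [hsum t σ, hs]
      rw [mul_add, Real.exp_add]
      have : β * (t * (-1)) = -(β * t) := by ring
      rw [this]
    rw [h1, h2]
  -- the shift constant
  set P : ℝ := Real.sqrt (Wp / Wm) with hP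
  have hPpos : 0 < P := Real.sqrt_pos.mpr (div_pos hWppos hWmpos)
  have hP2 : P^2 * Wm = Wp := by
    rw [hP, Real.sq_sqrt (div_pos hWppos hWmpos).le]
    field_simp
  refine ⟨Real.log P, fun t => ?_⟩
  have hx : 0 < Real.exp (β * t) := Real.exp_pos _
  have hy : 0 < Real.exp (-(β * t)) := Real.exp_pos _
  set x : ℝ := Real.exp (β * t)
  set y : ℝ := Real.exp (-(β * t))
  have hexpc : Real.exp (Real.log P) = P := Real.exp_log hPpos
  have hlhs : gibbsAvg β ℬ (Function.update J a t) A
      = (x * Wp - y * Wm) / (x * Wp + y * Wm) := by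
    rw [gibbsAvg, hnum t, hden t]
  have hy' : y = x⁻¹ := Real.exp_neg _
  have hrhs : Real.tanh (β * t + Real.log P)
      = (x * P - y * P⁻¹) / (x * P + y * P⁻¹) := by
    rw [Real.tanh_eq_sinh_div_cosh, Real.sinh_eq, Real.cosh_eq]
    rw [neg_add, Real.exp_add, Real.exp_add, Real.exp_neg, Real.exp_neg, hexpc, hy']
    rw [div_div_div_comm, div_self (by norm_num : (2:ℝ) ≠ 0), div_one]
  rw [hlhs, hrhs]
  have hd1 : (0:ℝ) < x * Wp + y * Wm := add_pos (mul_pos hx hWppos) (mul_pos hy hWmpos)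
  have hd2 : (0:ℝ) < x * P + y * P⁻¹ :=
    add_pos (mul_pos hx hPpos) (mul_pos hy (inv_pos.mpr hPpos))
  rw [div_eq_div_iff hd1.ne' hd2.ne', ← hP2]
  have hPinv : P * P⁻¹ = 1 := mul_inv_cancel₀ hPpos.ne'
  linear_combination (2*x*y*P*Wm) * hPinv

lemma gibbs_abs_le {V : Type} [Fintype V] [DecidableEq V] (β : ℝ)
    (ℬ : Finset (Finset V)) (A : Finset V) (hA : A ∈ ℬ) (hAne : A.Nonempty)
    (J : ℬ → ℝ) : |gibbsAvg β ℬ J A| ≤ 1 := by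
  obtain ⟨c, hc⟩ := gibbs_tanh β ℬ A hA hAne J
  have h := hc (J ⟨A, hA⟩)
  rw [Function.update_eq_self] at h
  rw [h]
  exact abs_tanh_le_one' _

lemma gibbs_measurable {V : Type} [Fintype V] [DecidableEq V] (β : ℝ)
    (ℬ : Finset (Finset V)) (A : Finset V) :
    Measurable fun J : ℬ → ℝ => gibbsAvg β ℬ J A := by
  have hS : ∀ σ : V → Bool, Measurable fun J : ℬ → ℝ =>
      Real.exp (β * ∑ B : ℬ, J B * sigmaSet σ (B : Finset V)) := by
    intro σ
    exact Real.measurable_exp.comp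
      ((Finset.measurable_sum Finset.univ fun B _ =>
        (measurable_pi_apply B).mul_const _).const_mul β)
  apply Measurable.div
  · exact Finset.measurable_sum Finset.univ fun σ _ => (hS σ).const_mul _
  · exact Finset.measurable_sum Finset.univ fun σ _ => hS σ

/-- For independent Gaussian couplings `J_B ~ N(J_{0,B}, Λ_B²)` at sufficiently high
temperature, `8β²Λ_A² ≥ 3`, the quenched average of the fourth power of the correlation
function has the nonzero lower bound `E[tanh⁴(βJ)]_{N(0, Λ_A²)} ≤ E[⟨σ_A⟩_J⁴]`. -/
theorem gaussian_correlation_fourth_lower_bound_high_temp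
    {V : Type} [Fintype V] [DecidableEq V]
    (ℬ : Finset (Finset V)) (hℬ : ∀ B ∈ ℬ, B.Nonempty)
    (β : ℝ) (hβ : 0 < β)
    (J0 : Finset V → ℝ) (Λ : Finset V → NNReal) (hΛ : ∀ B, 0 < Λ B)
    (A : Finset V) (hA : A ∈ ℬ)
    (htemp : 8 * β ^ 2 * (Λ A : ℝ) ^ 2 ≥ 3) :
    ∫ x, Real.tanh (β * x) ^ 4 ∂(gaussianReal 0 (Λ A ^ 2))
      ≤ ∫ J, gibbsAvg β ℬ J A ^ 4 ∂(gaussQuenched ℬ J0 Λ) := by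
  classical
  have hAne : A.Nonempty := hℬ A hA
  set a : {x // x ∈ ℬ} := ⟨A, hA⟩ with haa
  set μs : {x // x ∈ ℬ} → Measure ℝ :=
    fun B => gaussianReal (J0 (B : Finset V)) (Λ (B : Finset V) ^ 2) with hμs
  haveI : ∀ B, IsProbabilityMeasure (μs B) := fun B => by
    rw [hμs]; infer_instance
  haveI : IsProbabilityMeasure (Measure.pi μs) := by infer_instance
  set c : ℝ := ∫ x, Real.tanh (β * x) ^ 4 ∂(gaussianReal 0 (Λ A ^ 2)) with hcdef
  have hvA : (Λ A ^ 2 : ℝ≥0) ≠ 0 := pow_ne_zero 2 (hΛ A).ne'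
  have hβ0 : β ≠ 0 := hβ.ne'
  have hmeas : Measurable fun J : ℬ → ℝ => gibbsAvg β ℬ J A := gibbs_measurable β ℬ A
  have hg4meas : Measurable fun J : ℬ → ℝ => ENNReal.ofReal (gibbsAvg β ℬ J A ^ 4) :=
    (hmeas.pow_const 4).ennreal_ofReal
  have hnn : ∀ J : ℬ → ℝ, 0 ≤ gibbsAvg β ℬ J A ^ 4 := fun J => by positivity
  have hle1 : ∀ J : ℬ → ℝ, gibbsAvg β ℬ J A ^ 4 ≤ 1 := by
    intro J
    calc gibbsAvg β ℬ J A ^ 4 = |gibbsAvg β ℬ J A| ^ 4 := by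
          rw [← abs_pow, abs_of_nonneg (hnn J)]
      _ ≤ 1 := pow_le_one₀ (abs_nonneg _) (gibbs_abs_le β ℬ A hA hAne J)
  have hc0 : 0 ≤ c := integral_nonneg fun x => by positivity
  -- the conditional one-coordinate bound
  have hinner : ∀ x : ℬ → ℝ, ENNReal.ofReal c
      ≤ ∫⁻ t, ENNReal.ofReal (gibbsAvg β ℬ (Function.update x a t) A ^ 4) ∂(μs a) := by
    intro x
    obtain ⟨d, hd⟩ := gibbs_tanh β ℬ A hA hAne x
    have htanh_meas : Measurable fun t : ℝ => Real.tanh (β * t + d) ^ 4 :=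
      ((continuous_tanh'.comp ((continuous_const.mul continuous_id).add
        continuous_const)).pow 4).measurable
    have hint : Integrable (fun t => Real.tanh (β * t + d) ^ 4) (μs a) := by
      refine (integrable_const (1:ℝ)).mono' htanh_meas.aestronglyMeasurable
        (ae_of_all _ fun t => ?_)
      rw [Real.norm_eq_abs, abs_of_nonneg (by positivity)]
      simpa using tanh_pow4_le_one' (β * t + d)
    calc ENNReal.ofReal c
        ≤ ENNReal.ofReal (∫ t, Real.tanh (β * t + d) ^ 4 ∂(μs a)) := by
          apply ENNReal.ofReal_le_ofReal
          exact inner_bound hβ0 hvA (J0 A) d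
      _ = ∫⁻ t, ENNReal.ofReal (Real.tanh (β * t + d) ^ 4) ∂(μs a) :=
          ofReal_integral_eq_lintegral_ofReal hint (ae_of_all _ fun t => by positivity)
      _ = ∫⁻ t, ENNReal.ofReal (gibbsAvg β ℬ (Function.update x a t) A ^ 4) ∂(μs a) := by
          apply lintegral_congr
          intro t
          rw [hd t]
  -- the product-measure bound via marginals
  have hpi : ENNReal.ofReal c
      ≤ ∫⁻ J, ENNReal.ofReal (gibbsAvg β ℬ J A ^ 4) ∂(Measure.pi μs) := by
    have hconst : ∫⁻ J, (fun _ : ℬ → ℝ => ENNReal.ofReal c) J ∂(Measure.pi μs)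
        = ENNReal.ofReal c := by
      simp
    rw [← hconst]
    apply lintegral_le_of_lmarginal_le (μ := μs) {a} measurable_const hg4meas
    intro x
    rw [lmarginal_singleton, lmarginal_singleton]
    calc (∫⁻ t, (fun _ : ℬ → ℝ => ENNReal.ofReal c) (Function.update x a t) ∂(μs a))
        = ENNReal.ofReal c := by simp
      _ ≤ _ := hinner x
  -- conversion to Bochner integrals
  have hRHS : ∫ J, gibbsAvg β ℬ J A ^ 4 ∂(gaussQuenched ℬ J0 Λ)
      = (∫⁻ J, ENNReal.ofReal (gibbsAvg β ℬ J A ^ 4) ∂(Measure.pi μs)).toReal := by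
    have : gaussQuenched ℬ J0 Λ = Measure.pi μs := rfl
    rw [this, integral_eq_lintegral_of_nonneg_ae (ae_of_all _ hnn)
      (hmeas.pow_const 4).aestronglyMeasurable]
  have hfin : ∫⁻ J, ENNReal.ofReal (gibbsAvg β ℬ J A ^ 4) ∂(Measure.pi μs) ≠ ⊤ := by
    have hle : ∫⁻ J, ENNReal.ofReal (gibbsAvg β ℬ J A ^ 4) ∂(Measure.pi μs)
        ≤ ∫⁻ _, 1 ∂(Measure.pi μs) := by
      apply lintegral_mono
      intro J
      exact ENNReal.ofReal_le_one.mpr (hle1 J)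
    refine ne_top_of_le_ne_top ?_ hle
    simp
  rw [hRHS]
  calc c = (ENNReal.ofReal c).toReal := (ENNReal.toReal_ofReal hc0).symm
    _ ≤ _ := ENNReal.toReal_mono hfin hpi
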